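/- Let M be any joint distribution (k-dimensional array) whose k one-dimensional marginals are the probability distributions p^(1),...,p^(k). Then H(M) ≥ H(p^(1) ∧ p^(2) ∧ ... ∧ p^(k)). -/

import Mathlib

open Finset

/-- Majorization via prefix sums (vectors as functions ℕ → ℝ, padded with zeros). -/
def Maj (p q : ℕ → ℝ) : Prop :=
  ∀ i : ℕ, ∑ k ∈ Finset.range i, p k ≤ ∑ k ∈ Finset.range i, q k

/-- A probability vector of length `n`, sorted non-increasingly, zero beyond `n`. -/
def IsProbVec (n : ℕ) (p : ℕ → ℝ) : Prop :=
  (∀ i, 0 ≤ p i) ∧ (∀ i j : ℕ, i ≤ j → p j ≤ p i) ∧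
  (∑ k ∈ Finset.range n, p k = 1) ∧ (∀ i, n ≤ i → p i = 0)

/-- The greatest lower bound `p ∧ q` in the majorization lattice. -/
noncomputable def meet (p q : ℕ → ℝ) : ℕ → ℝ := fun i =>
  min (∑ k ∈ Finset.range (i + 1), p k) (∑ k ∈ Finset.range (i + 1), q k) -
  min (∑ k ∈ Finset.range i, p k) (∑ k ∈ Finset.range i, q k)

/-- Shannon entropy (base 2) of the first `n` components. -/
noncomputable def H2 (n : ℕ) (p : ℕ → ℝ) : ℝ :=
  ∑ k ∈ Finset.range n, -(p k * Real.logb 2 (p k))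

/-- Shannon entropy (base 2) of the entries of an `n × m` matrix. -/
noncomputable def Hmat (n m : ℕ) (M : ℕ → ℕ → ℝ) : ℝ :=
  ∑ i ∈ Finset.range n, ∑ j ∈ Finset.range m, -(M i j * Real.logb 2 (M i j))

/-- `M` is a coupling of `p` and `q`: nonnegative, row sums `p`, column sums `q`. -/
def IsCoupling (n m : ℕ) (p q : ℕ → ℝ) (M : ℕ → ℕ → ℝ) : Prop :=
  (∀ i j, 0 ≤ M i j) ∧ (∀ i < n, ∑ j ∈ Finset.range m, M i j = p i) ∧
  (∀ j < m, ∑ i ∈ Finset.range n, M i j = q j)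

/-- The `half` operator: duplicates and halves each component. -/
noncomputable def half (p : ℕ → ℝ) : ℕ → ℝ := fun i => p (i / 2) / 2

/-- Iterated `half` operator. -/
noncomputable def halfIter : ℕ → (ℕ → ℝ) → (ℕ → ℝ)
  | 0, p => p
  | (i + 1), p => half (halfIter i p)

/-- Iterated majorization meet of `p 0, p 1, …, p k`. -/
noncomputable def bigMeet (p : ℕ → ℕ → ℝ) : ℕ → (ℕ → ℝ)
  | 0 => p 0
  | (k + 1) => meet (bigMeet p k) (p (k + 1))

lemma tangent (a x : ℝ) (ha : 0 < a) (hx : 0 ≤ x) :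
    Real.negMulLog x ≤ Real.negMulLog a + (-Real.log a - 1) * (x - a) := by
  rcases eq_or_lt_of_le hx with h | h
  · subst h
    simp [Real.negMulLog]
    nlinarith [Real.log_le_sub_one_of_pos ha]
  · have h1 : Real.log (a / x) ≤ a / x - 1 := Real.log_le_sub_one_of_pos (by positivity)
    have h2 : Real.log (a / x) = Real.log a - Real.log x := Real.log_div ha.ne' h.ne'
    have h3 : x * Real.log (a / x) ≤ x * (a / x - 1) :=
      mul_le_mul_of_nonneg_left h1 h.le
    have h4 : x * (a / x - 1) = a - x := by field_simp
    simp only [Real.negMulLog]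
    nlinarith

lemma abel_aux (N : ℕ) (c d : ℕ → ℝ) (hc : ∀ i, i + 1 < N → c i ≤ c (i + 1))
    (hd : ∀ i ≤ N, 0 ≤ ∑ t ∈ Finset.range i, d t) :
    ∀ m, 0 < m → m ≤ N →
      ∑ i ∈ Finset.range m, c i * d i ≤ c (m - 1) * ∑ t ∈ Finset.range m, d t := by
  intro m
  induction m with
  | zero => intro h; omega
  | succ m ih =>
    intro _ hmN
    rcases Nat.eq_zero_or_pos m with hm | hm
    · subst hm; simp
    · have hmN' : m ≤ N := by omega
      have h1 := ih hm hmN'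
      have h2 : c (m - 1) ≤ c m := by
        have := hc (m - 1) (by omega)
        have hm1 : m - 1 + 1 = m := by omega
        rwa [hm1] at this
      have h3 : 0 ≤ ∑ t ∈ Finset.range m, d t := hd m hmN'
      rw [Finset.sum_range_succ, Finset.sum_range_succ]
      have : c (m - 1) * ∑ t ∈ Finset.range m, d t ≤ c m * ∑ t ∈ Finset.range m, d t :=
        mul_le_mul_of_nonneg_right h2 h3
      simp only [Nat.add_sub_cancel]
      nlinarith [h1]

lemma abel_le (N : ℕ) (c d : ℕ → ℝ) (hc : ∀ i, i + 1 < N → c i ≤ c (i + 1))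
    (hd : ∀ i ≤ N, 0 ≤ ∑ t ∈ Finset.range i, d t)
    (hdN : ∑ t ∈ Finset.range N, d t = 0) :
    ∑ i ∈ Finset.range N, c i * d i ≤ 0 := by
  rcases Nat.eq_zero_or_pos N with h | h
  · subst h; simp
  · have := abel_aux N c d hc hd N h le_rfl
    rw [hdN] at this
    simpa using this

lemma sum_finset_le_sum_range (q : ℕ → ℝ) (hq0 : ∀ i, 0 ≤ q i)
    (hqm : ∀ i j : ℕ, i ≤ j → q j ≤ q i) :
    ∀ (m : ℕ) (U : Finset ℕ), U.card = m → ∑ u ∈ U, q u ≤ ∑ t ∈ Finset.range m, q t := by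
  intro m
  induction m with
  | zero => intro U hU; rw [Finset.card_eq_zero] at hU; subst hU; simp
  | succ m ih =>
    intro U hU
    have hne : U.Nonempty := Finset.card_pos.mp (by omega)
    set u := U.max' hne with hu
    have hmem : u ∈ U := U.max'_mem hne
    have hsub : U ⊆ Finset.range (u + 1) := by
      intro x hx
      simp only [Finset.mem_range]
      exact Nat.lt_succ_of_le (U.le_max' x hx)
    have hcard : m + 1 ≤ u + 1 := by
      calc m + 1 = U.card := hU.symm
        _ ≤ (Finset.range (u + 1)).card := Finset.card_le_card hsub
        _ = u + 1 := Finset.card_range _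
    have herase : (U.erase u).card = m := by
      rw [Finset.card_erase_of_mem hmem, hU]
      omega
    have h1 := ih (U.erase u) herase
    have h2 : q u ≤ q m := hqm m u (by omega)
    have h3 : ∑ x ∈ U.erase u, q x + q u = ∑ x ∈ U, q x := Finset.sum_erase_add U q hmem
    rw [Finset.sum_range_succ]
    linarith

lemma meet_PS (a b : ℕ → ℝ) (i : ℕ) :
    ∑ t ∈ Finset.range i, meet a b t =
      min (∑ t ∈ Finset.range i, a t) (∑ t ∈ Finset.range i, b t) := by
  have := Finset.sum_range_sub
    (fun t => min (∑ s ∈ Finset.range t, a s) (∑ s ∈ Finset.range t, b s)) i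
  simpa [meet] using this

lemma bigMeet_PS_ge (p : ℕ → ℕ → ℝ) (k i : ℕ) (x : ℝ)
    (h : ∀ j ≤ k, x ≤ ∑ t ∈ Finset.range i, p j t) :
    x ≤ ∑ t ∈ Finset.range i, bigMeet p k t := by
  induction k with
  | zero => exact h 0 le_rfl
  | succ k ih =>
    show x ≤ ∑ t ∈ Finset.range i, meet (bigMeet p k) (p (k + 1)) t
    rw [meet_PS]
    exact le_min (ih fun j hj => h j (by omega)) (h (k + 1) le_rfl)

lemma bigMeet_PS_le (p : ℕ → ℕ → ℝ) (k i : ℕ) (j : ℕ) (hj : j ≤ k) :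
    ∑ t ∈ Finset.range i, bigMeet p k t ≤ ∑ t ∈ Finset.range i, p j t := by
  induction k with
  | zero =>
    have : j = 0 := by omega
    subst this; exact le_rfl
  | succ k ih =>
    show ∑ t ∈ Finset.range i, meet (bigMeet p k) (p (k + 1)) t ≤ _
    rw [meet_PS]
    rcases Nat.lt_succ_iff_lt_or_eq.mp (Nat.lt_succ_of_le hj) with h | h
    · exact le_trans (min_le_left _ _) (ih (by omega))
    · subst h; exact min_le_right _ _

lemma bigMeet_entry (p : ℕ → ℕ → ℝ) (k t : ℕ) :
    bigMeet p k t = ∑ s ∈ Finset.range (t + 1), bigMeet p k s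
      - ∑ s ∈ Finset.range t, bigMeet p k s := by
  rw [Finset.sum_range_succ]; ring

lemma bigMeet_nonneg (p : ℕ → ℕ → ℝ) :
    ∀ k, (∀ j ≤ k, ∀ t, 0 ≤ p j t) → ∀ t, 0 ≤ bigMeet p k t := by
  intro k
  induction k with
  | zero => intro hnn t; exact hnn 0 le_rfl t
  | succ k ih =>
    intro hnn t
    show 0 ≤ meet (bigMeet p k) (p (k + 1)) t
    have h1 : ∀ s, 0 ≤ bigMeet p k s := ih (fun j hj => hnn j (by omega))
    have h2 : ∑ s ∈ Finset.range t, bigMeet p k s ≤ ∑ s ∈ Finset.range (t+1), bigMeet p k s := by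
      rw [Finset.sum_range_succ]; linarith [h1 t]
    have h3 : ∑ s ∈ Finset.range t, p (k+1) s ≤ ∑ s ∈ Finset.range (t+1), p (k+1) s := by
      rw [Finset.sum_range_succ]; linarith [hnn (k+1) le_rfl t]
    have := min_le_min h2 h3
    simp only [meet]
    linarith

lemma probVec_PS (n : ℕ) (q : ℕ → ℝ) (hq : IsProbVec n q) (i : ℕ) (hi : n ≤ i) :
    ∑ t ∈ Finset.range i, q t = 1 := by
  have hsplit : ∑ t ∈ Finset.range n, q t + ∑ t ∈ Finset.Ico n i, q t
      = ∑ t ∈ Finset.range i, q t := by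
    rw [Finset.range_eq_Ico, Finset.range_eq_Ico]
    exact Finset.sum_Ico_consecutive q (Nat.zero_le n) hi
  have h0 : ∑ t ∈ Finset.Ico n i, q t = 0 := by
    apply Finset.sum_eq_zero
    intro t ht
    rw [Finset.mem_Ico] at ht
    exact hq.2.2.2 t ht.1
  rw [← hsplit, h0, add_zero, hq.2.2.1]

lemma bigMeet_PS_one (p : ℕ → ℕ → ℝ) (k n : ℕ) (hp : ∀ j ≤ k, IsProbVec n (p j))
    (i : ℕ) (hi : n ≤ i) : ∑ t ∈ Finset.range i, bigMeet p k t = 1 := by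
  apply le_antisymm
  · calc ∑ t ∈ Finset.range i, bigMeet p k t ≤ ∑ t ∈ Finset.range i, p 0 t :=
          bigMeet_PS_le p k i 0 (Nat.zero_le k)
      _ = 1 := probVec_PS n (p 0) (hp 0 (Nat.zero_le k)) i hi
  · apply bigMeet_PS_ge
    intro j hj
    rw [probVec_PS n (p j) (hp j hj) i hi]

lemma bigMeet_zero_beyond (p : ℕ → ℕ → ℝ) (k n : ℕ) (hp : ∀ j ≤ k, IsProbVec n (p j))
    (t : ℕ) (ht : n ≤ t) : bigMeet p k t = 0 := by
  rw [bigMeet_entry, bigMeet_PS_one p k n hp (t+1) (by omega),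
    bigMeet_PS_one p k n hp t ht, sub_self]

lemma key (N : ℕ) (a b : ℕ → ℝ)
    (ha0 : ∀ i < N, 0 ≤ a i)
    (hamono : ∀ i j : ℕ, i ≤ j → j < N → a j ≤ a i)
    (hb0 : ∀ i < N, 0 ≤ b i)
    (hpre : ∀ i ≤ N, ∑ t ∈ Finset.range i, a t ≤ ∑ t ∈ Finset.range i, b t)
    (hsum : ∑ t ∈ Finset.range N, a t = ∑ t ∈ Finset.range N, b t) :
    ∑ t ∈ Finset.range N, Real.negMulLog (b t) ≤ ∑ t ∈ Finset.range N, Real.negMulLog (a t) := by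
  classical
  have hex : ∃ i, i = N ∨ a i ≤ 0 := ⟨N, Or.inl rfl⟩
  set m := Nat.find hex with hm
  have hmN : m ≤ N := Nat.find_min' hex (Or.inl rfl)
  have hpos : ∀ i < m, 0 < a i := by
    intro i hi
    have := Nat.find_min hex hi
    push_neg at this
    exact this.2
  have hazero : ∀ i, m ≤ i → i < N → a i = 0 := by
    intro i hmi hiN
    have hmlt : m < N := lt_of_le_of_lt hmi hiN
    have hPm : m = N ∨ a m ≤ 0 := Nat.find_spec hex
    have ham : a m ≤ 0 := hPm.resolve_left (by omega)
    have h1 : a i ≤ a m := hamono m i hmi hiN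
    have h2 : 0 ≤ a i := ha0 i hiN
    linarith
  -- split sums at m
  have hsplit : ∀ f : ℕ → ℝ, ∑ t ∈ Finset.range m, f t + ∑ t ∈ Finset.Ico m N, f t
      = ∑ t ∈ Finset.range N, f t := by
    intro f
    rw [Finset.range_eq_Ico, Finset.range_eq_Ico]
    exact Finset.sum_Ico_consecutive f (Nat.zero_le m) hmN
  have haIco : ∑ t ∈ Finset.Ico m N, a t = 0 := by
    apply Finset.sum_eq_zero
    intro t ht
    rw [Finset.mem_Ico] at ht
    exact hazero t ht.1 ht.2
  have haN : ∑ t ∈ Finset.range N, a t = ∑ t ∈ Finset.range m, a t := by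
    rw [← hsplit a, haIco, add_zero]
  have hbzero : ∀ i, m ≤ i → i < N → b i = 0 := by
    intro i hmi hiN
    have h1 : b i ≤ ∑ t ∈ Finset.Ico m N, b t := by
      apply Finset.single_le_sum (f := b)
      · intro t ht
        rw [Finset.mem_Ico] at ht
        exact hb0 t ht.2
      · rw [Finset.mem_Ico]; exact ⟨hmi, hiN⟩
    have h2 : ∑ t ∈ Finset.Ico m N, b t
        = ∑ t ∈ Finset.range N, b t - ∑ t ∈ Finset.range m, b t := by
      rw [← hsplit b]; ring
    have h3 := hpre m hmN
    have h4 : 0 ≤ b i := hb0 i hiN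
    rw [h2, ← hsum, haN] at h1
    linarith
  have hsum_m : ∑ t ∈ Finset.range m, a t = ∑ t ∈ Finset.range m, b t := by
    have hbIco : ∑ t ∈ Finset.Ico m N, b t = 0 := by
      apply Finset.sum_eq_zero
      intro t ht
      rw [Finset.mem_Ico] at ht
      exact hbzero t ht.1 ht.2
    have hbN : ∑ t ∈ Finset.range N, b t = ∑ t ∈ Finset.range m, b t := by
      rw [← hsplit b, hbIco, add_zero]
    rw [← haN, hsum, hbN]
  -- reduce to range m
  have hredb : ∑ t ∈ Finset.range N, Real.negMulLog (b t)
      = ∑ t ∈ Finset.range m, Real.negMulLog (b t) := by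
    rw [← hsplit fun t => Real.negMulLog (b t)]
    have : ∑ t ∈ Finset.Ico m N, Real.negMulLog (b t) = 0 := by
      apply Finset.sum_eq_zero
      intro t ht
      rw [Finset.mem_Ico] at ht
      rw [hbzero t ht.1 ht.2, Real.negMulLog_zero]
    rw [this, add_zero]
  have hreda : ∑ t ∈ Finset.range N, Real.negMulLog (a t)
      = ∑ t ∈ Finset.range m, Real.negMulLog (a t) := by
    rw [← hsplit fun t => Real.negMulLog (a t)]
    have : ∑ t ∈ Finset.Ico m N, Real.negMulLog (a t) = 0 := by
      apply Finset.sum_eq_zero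
      intro t ht
      rw [Finset.mem_Ico] at ht
      rw [hazero t ht.1 ht.2, Real.negMulLog_zero]
    rw [this, add_zero]
  rw [hredb, hreda]
  -- tangent line argument
  set c : ℕ → ℝ := fun i => -Real.log (a i) - 1 with hc
  set d : ℕ → ℝ := fun i => b i - a i with hd
  have hterm : ∀ i ∈ Finset.range m,
      Real.negMulLog (b i) ≤ Real.negMulLog (a i) + c i * d i := by
    intro i hi
    rw [Finset.mem_range] at hi
    exact tangent (a i) (b i) (hpos i hi) (hb0 i (lt_of_lt_of_le hi hmN))
  have h1 : ∑ t ∈ Finset.range m, Real.negMulLog (b t)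
      ≤ ∑ t ∈ Finset.range m, (Real.negMulLog (a t) + c t * d t) :=
    Finset.sum_le_sum hterm
  have h2 : ∑ i ∈ Finset.range m, c i * d i ≤ 0 := by
    apply abel_le m c d
    · intro i hi
      have hlog : Real.log (a (i + 1)) ≤ Real.log (a i) := by
        apply Real.log_le_log (hpos (i + 1) hi)
        exact hamono i (i + 1) (Nat.le_succ i) (lt_of_lt_of_le hi hmN)
      simp only [hc]
      linarith
    · intro i him
      have := hpre i (le_trans him hmN)
      simp only [hd, Finset.sum_sub_distrib]
      linarith
    · simp only [hd, Finset.sum_sub_distrib]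
      rw [hsum_m]; ring
  rw [Finset.sum_add_distrib] at h1
  linarith

lemma subset_bound {k n : ℕ} (M : (Fin (k + 1) → Fin n) → ℝ) (hMnn : ∀ f, 0 ≤ M f)
    (j : Fin (k + 1)) (q : ℕ → ℝ) (hq0 : ∀ i, 0 ≤ q i)
    (hqm : ∀ i j : ℕ, i ≤ j → q j ≤ q i)
    (hmargj : ∀ t : Fin n,
      ∑ f ∈ Finset.univ.filter (fun f : Fin (k + 1) → Fin n => f j = t), M f = q t.val)
    (S : Finset (Fin (k + 1) → Fin n)) (i : ℕ) (hcard : S.card ≤ i) :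
    ∑ f ∈ S, M f ≤ ∑ t ∈ Finset.range i, q t := by
  classical
  set T : Finset (Fin n) := S.image (fun f => f j) with hT
  have h1 : ∑ t ∈ T, ∑ f ∈ S.filter (fun f => f j = t), M f = ∑ f ∈ S, M f :=
    Finset.sum_fiberwise_of_maps_to (fun f hf => Finset.mem_image_of_mem _ hf) M
  have h2 : ∀ t ∈ T, ∑ f ∈ S.filter (fun f => f j = t), M f
      ≤ ∑ f ∈ Finset.univ.filter (fun f => f j = t), M f := by
    intro t _
    apply Finset.sum_le_sum_of_subset_of_nonneg
    · exact Finset.filter_subset_filter _ (Finset.subset_univ S)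
    · intro f _ _; exact hMnn f
  have h3 : ∑ f ∈ S, M f ≤ ∑ t ∈ T, q t.val := by
    rw [← h1]
    calc ∑ t ∈ T, ∑ f ∈ S.filter (fun f => f j = t), M f
        ≤ ∑ t ∈ T, ∑ f ∈ Finset.univ.filter (fun f => f j = t), M f := Finset.sum_le_sum h2
      _ = ∑ t ∈ T, q t.val := by
          apply Finset.sum_congr rfl
          intro t _; exact hmargj t
  have h4 : ∑ t ∈ T, q t.val = ∑ u ∈ T.image Fin.val, q u := by
    rw [Finset.sum_image (fun a _ b _ h => Fin.val_injective h)]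
  have h5 : (T.image Fin.val).card ≤ i := by
    calc (T.image Fin.val).card ≤ T.card := Finset.card_image_le
      _ ≤ S.card := Finset.card_image_le
      _ ≤ i := hcard
  have h6 : ∑ u ∈ T.image Fin.val, q u
      ≤ ∑ t ∈ Finset.range (T.image Fin.val).card, q t :=
    sum_finset_le_sum_range q hq0 hqm _ _ rfl
  have h7 : ∑ t ∈ Finset.range (T.image Fin.val).card, q t ≤ ∑ t ∈ Finset.range i, q t := by
    apply Finset.sum_le_sum_of_subset_of_nonneg
    · exact Finset.range_subset_range.mpr h5
    · intro t _ _; exact hq0 t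
  linarith

theorem stmt14 (k n : ℕ) (p : ℕ → ℕ → ℝ) (hp : ∀ j ≤ k, IsProbVec n (p j))
    (M : (Fin (k + 1) → Fin n) → ℝ) (hMnn : ∀ f, 0 ≤ M f)
    (hmarg : ∀ (j : Fin (k + 1)) (t : Fin n),
      ∑ f ∈ Finset.univ.filter (fun f : Fin (k + 1) → Fin n => f j = t), M f =
        p j.val t.val) :
    H2 n (bigMeet p k) ≤ ∑ f : Fin (k + 1) → Fin n, -(M f * Real.logb 2 (M f)) := by
  classical
  rcases Nat.eq_zero_or_pos n with hn | hn
  · exfalso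
    have h1 := (hp 0 (Nat.zero_le k)).2.2.1
    subst hn
    simp at h1
  set N := Fintype.card (Fin (k + 1) → Fin n) with hN
  have hNcard : N = n ^ (k + 1) := by
    rw [hN, Fintype.card_fun, Fintype.card_fin, Fintype.card_fin]
  have hnN : n ≤ N := by
    rw [hNcard]
    exact Nat.le_self_pow (by omega) n
  set e : Fin N ≃ (Fin (k + 1) → Fin n) := (Fintype.equivFin _).symm with he
  set σ : Equiv.Perm (Fin N) := Tuple.sort (fun i : Fin N => -M (e i)) with hσ
  have hmono : Monotone ((fun i : Fin N => -M (e i)) ∘ σ) := Tuple.monotone_sort _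
  set a : ℕ → ℝ := fun t => if h : t < N then M (e (σ ⟨t, h⟩)) else 0 with ha
  have ha0 : ∀ i < N, 0 ≤ a i := by
    intro i hi
    simp only [ha, dif_pos hi]
    exact hMnn _
  have hamono : ∀ i j : ℕ, i ≤ j → j < N → a j ≤ a i := by
    intro i j hij hjN
    have hiN : i < N := lt_of_le_of_lt hij hjN
    have := hmono (a := (⟨i, hiN⟩ : Fin N)) (b := ⟨j, hjN⟩) hij
    simp only [Function.comp_apply] at this
    simp only [ha, dif_pos hiN, dif_pos hjN]
    linarith
  -- transport sums over all of Fin N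
  have hsumG : ∀ G : ℝ → ℝ, ∑ t ∈ Finset.range N, G (a t) = ∑ f : Fin (k + 1) → Fin n, G (M f) := by
    intro G
    rw [← Fin.sum_univ_eq_sum_range (fun t => G (a t)) N]
    rw [← Equiv.sum_comp (σ.trans e) (fun f => G (M f))]
    apply Finset.sum_congr rfl
    intro t _
    simp only [ha, dif_pos t.isLt, Equiv.trans_apply]
  -- total sum of M is 1
  have hMsum : ∑ f : Fin (k + 1) → Fin n, M f = 1 := by
    have h1 : ∑ t : Fin n, ∑ f ∈ Finset.univ.filter
        (fun f : Fin (k + 1) → Fin n => f 0 = t), M f = ∑ f : Fin (k + 1) → Fin n, M f := Finset.sum_fiberwise _ _ _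
    have h2 : ∑ t : Fin n, p (0 : Fin (k+1)).val t.val = ∑ t ∈ Finset.range n, p 0 t := by
      rw [← Fin.sum_univ_eq_sum_range (fun t => p 0 t) n]
      simp
    rw [← h1]
    calc ∑ t : Fin n, ∑ f ∈ Finset.univ.filter (fun f : Fin (k + 1) → Fin n => f 0 = t), M f
        = ∑ t : Fin n, p (0 : Fin (k+1)).val t.val := by
          apply Finset.sum_congr rfl; intro t _; exact hmarg 0 t
      _ = ∑ t ∈ Finset.range n, p 0 t := h2
      _ = 1 := (hp 0 (Nat.zero_le k)).2.2.1
  set b : ℕ → ℝ := bigMeet p k with hb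
  have hb0 : ∀ i < N, 0 ≤ b i := fun i _ =>
    bigMeet_nonneg p k (fun j hj t => (hp j hj).1 t) i
  -- prefix sums of a are sums over subsets of M of card ≤ i
  have hpre : ∀ i ≤ N, ∑ t ∈ Finset.range i, a t ≤ ∑ t ∈ Finset.range i, b t := by
    intro i hiN
    apply bigMeet_PS_ge
    intro j hj
    set ι : Fin N → (Fin (k + 1) → Fin n) := fun x => e (σ x) with hι
    have hinj : Function.Injective ι := (σ.trans e).injective
    set T : Finset (Fin N) := Finset.univ.filter (fun x : Fin N => x.val < i) with hT
    set S : Finset (Fin (k + 1) → Fin n) := T.image ι with hS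
    have hsum_eq : ∑ t ∈ Finset.range i, a t = ∑ f ∈ S, M f := by
      rw [hS, Finset.sum_image (fun x _ y _ h => hinj h)]
      set g : ℕ → ℝ := fun t => if t < i then a t else 0 with hg
      have h1 : ∑ t ∈ Finset.range i, a t = ∑ t ∈ Finset.range N, g t := by
        have e1 : ∑ t ∈ Finset.range i, a t = ∑ t ∈ Finset.range i, g t := by
          apply Finset.sum_congr rfl
          intro t ht
          rw [Finset.mem_range] at ht
          rw [hg]; simp [ht]
        have e2 : ∑ t ∈ Finset.range i, g t = ∑ t ∈ Finset.range N, g t := by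
          apply Finset.sum_subset (Finset.range_subset_range.mpr hiN)
          intro t _ ht
          rw [Finset.mem_range] at ht
          rw [hg]; simp [ht]
        rw [e1, e2]
      have h2 : ∑ t ∈ Finset.range N, g t = ∑ x : Fin N, g x.val :=
        (Fin.sum_univ_eq_sum_range g N).symm
      have h3 : ∑ x : Fin N, g x.val = ∑ x ∈ T, a x.val := by
        rw [hT, Finset.sum_filter]
        try rfl
        try (apply Finset.sum_congr rfl; intro x _; simp [hg])
      have h4 : ∑ x ∈ T, a x.val = ∑ x ∈ T, M (ι x) := by
        apply Finset.sum_congr rfl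
        intro x _
        simp only [ha, hι, dif_pos x.isLt]
      rw [h1, h2, h3, h4]
    have hcard : S.card ≤ i := by
      calc S.card ≤ T.card := Finset.card_image_le
        _ ≤ i := by
            have : T.image (Fin.val) ⊆ Finset.range i := by
              intro u hu
              rw [Finset.mem_image] at hu
              obtain ⟨x, hx, rfl⟩ := hu
              rw [hT, Finset.mem_filter] at hx
              exact Finset.mem_range.mpr hx.2
            calc T.card = (T.image Fin.val).card :=
                  (Finset.card_image_of_injective T Fin.val_injective).symm
              _ ≤ (Finset.range i).card := Finset.card_le_card this
              _ = i := Finset.card_range i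
    rw [hsum_eq]
    apply subset_bound M hMnn ⟨j, by omega⟩ (p j) (hp j hj).1 (hp j hj).2.1 _ S i hcard
    intro t
    exact hmarg ⟨j, by omega⟩ t
  have hsum : ∑ t ∈ Finset.range N, a t = ∑ t ∈ Finset.range N, b t := by
    have h1 : ∑ t ∈ Finset.range N, a t = 1 := by
      have := hsumG id
      simpa [hMsum] using this
    rw [h1, hb, bigMeet_PS_one p k n hp N hnN]
  have hkey := key N a b ha0 hamono hb0 hpre hsum
  -- convert negMulLog sums to logb 2 sums
  have hL : (0:ℝ) < Real.log 2 := Real.log_pos (by norm_num)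
  have hconv : ∀ x : ℝ, -(x * Real.logb 2 x) = Real.negMulLog x / Real.log 2 := by
    intro x
    rw [Real.negMulLog, Real.logb]
    ring
  have hbtail : ∑ t ∈ Finset.range N, Real.negMulLog (b t)
      = ∑ t ∈ Finset.range n, Real.negMulLog (b t) := by
    have hsplit : ∑ t ∈ Finset.range n, Real.negMulLog (b t)
        + ∑ t ∈ Finset.Ico n N, Real.negMulLog (b t)
        = ∑ t ∈ Finset.range N, Real.negMulLog (b t) := by
      rw [Finset.range_eq_Ico, Finset.range_eq_Ico]
      exact Finset.sum_Ico_consecutive _ (Nat.zero_le n) hnN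
    have h0 : ∑ t ∈ Finset.Ico n N, Real.negMulLog (b t) = 0 := by
      apply Finset.sum_eq_zero
      intro t ht
      rw [Finset.mem_Ico] at ht
      rw [hb, bigMeet_zero_beyond p k n hp t ht.1, Real.negMulLog_zero]
    rw [← hsplit, h0, add_zero]
  have hH2 : H2 n b = (∑ t ∈ Finset.range n, Real.negMulLog (b t)) / Real.log 2 := by
    rw [H2, Finset.sum_div]
    apply Finset.sum_congr rfl
    intro t _
    exact hconv (b t)
  have hRHS : ∑ f : Fin (k + 1) → Fin n, -(M f * Real.logb 2 (M f))
      = (∑ t ∈ Finset.range N, Real.negMulLog (a t)) / Real.log 2 := by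
    rw [hsumG Real.negMulLog, Finset.sum_div]
    apply Finset.sum_congr rfl
    intro f _
    exact hconv (M f)
  rw [hH2, hRHS]
  rw [← hbtail]
  gcongr
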